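/- Let f : ⊕_{i∈I} ℚ → A be an injective homomorphism of abelian groups and g : A → B a homomorphism with countable kernel, where I is uncountable. Then there exists a subset J ⊆ I with the same cardinality as I such that the restriction of g ∘ f to ⊕_{j∈J} ℚ is injective. -/
import Mathlib


/-- If `f : ⊕_I ℚ → A` is injective and `g : A → B` has countable kernel, with `I`
uncountable, then there is `J ⊆ I` of the same cardinality as `I` such that `g ∘ f` is
injective on the sub-direct-sum of summands indexed by `J`. -/
theorem restrict_injective_of_countable_kernel {I : Type*} [Uncountable I]
    {A B : Type*} [AddCommGroup A] [AddCommGroup B]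
    (f : (I →₀ ℚ) →+ A) (hf : Function.Injective f)
    (g : A →+ B) (hg : (g.ker : Set A).Countable) :
    ∃ J : Set I, Cardinal.mk J = Cardinal.mk I ∧
      Set.InjOn (g.comp f) {x : I →₀ ℚ | ↑x.support ⊆ J} := by
  classical
  set K : Set (I →₀ ℚ) := f ⁻¹' (g.ker : Set A) with hKdef
  have hKc : K.Countable := hg.preimage hf
  set S : Set I := ⋃ x ∈ K, (↑x.support : Set I) with hSdef
  have hSc : S.Countable :=
    hKc.biUnion (fun x _ => (x.support.finite_toSet).countable)
  refine ⟨Sᶜ, ?_, ?_⟩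
  · have h1 : Cardinal.mk S + Cardinal.mk ↥Sᶜ = Cardinal.mk I :=
      Cardinal.mk_sum_compl S
    have h2 : Cardinal.mk S < Cardinal.mk I :=
      lt_of_le_of_lt (Cardinal.mk_le_aleph0_iff.2 hSc)
        (Cardinal.aleph0_lt_mk (α := I))
    exact Cardinal.eq_of_add_eq_of_aleph0_le h1 h2 (Cardinal.aleph0_le_mk I)
  · intro x hx y hy hxy
    have hmem : x - y ∈ K := by
      simp only [hKdef, Set.mem_preimage, SetLike.mem_coe, AddMonoidHom.mem_ker,
        map_sub]
      rw [sub_eq_zero]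
      exact hxy
    have hsubS : ((x - y).support : Set I) ⊆ S := fun i hi =>
      Set.mem_biUnion hmem hi
    have hsubC : ((x - y).support : Set I) ⊆ Sᶜ := by
      intro i hi
      have := Finsupp.support_sub (f := x) (g := y) hi
      rcases Finset.mem_union.mp this with h | h
      · exact hx h
      · exact hy h
    have hz : x - y = 0 := by
      ext i
      by_contra h
      have hi : i ∈ (x - y).support := Finsupp.mem_support_iff.2 h
      exact hsubC hi (hsubS hi)
    exact sub_eq_zero.mp hz
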